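/- (Jirásek–Grassl plastic correction, converse direction.) Assume ϱ^tr > 0 and f̂(p^tr, ϱ^tr, ϱ_e(σ^tr)) > 0. Let (p, ϱ, Δλ) with Δλ > 0 and ϱ ≥ 0 solve the reduced system: p = p^tr − Δλ·K·m_g'(p)/f̄_c, ϱ = max(0, ϱ^tr − Δλ·2G·(3ϱ/f̄_c² + m₀/(√6·f̄_c))), and f̂(p, ϱ, ϱ·r_e(cos θ(σ^tr))) = 0. Define σ = p·I + ϱ·(s^tr/ϱ^tr) if ϱ^tr > Δλ·2G·(3ϱ/f̄_c² + m₀/(√6·f̄_c)), and σ = p·I otherwise. Then p(σ) = p, ϱ(σ) = ϱ, there exists n̂ ∈ ∂ϱ(σ) with σ = σ^tr − Δλ·[K·(m_g'(p(σ))/f̄_c)·I + 2G·(3ϱ(σ)/f̄_c² + m₀/(√6·f̄_c))·n̂], and f̂(p(σ), ϱ(σ), ϱ_e(σ)) = 0. -/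

import Mathlib

open Matrix

noncomputable section

/-- The space of real 3×3 matrices (we restrict to symmetric ones via `Matrix.IsSymm`). -/
abbrev Mat3 := Matrix (Fin 3) (Fin 3) ℝ

/-- Frobenius inner product (for symmetric matrices): ⟨A,B⟩ = tr(A·B). -/
def finner (A B : Mat3) : ℝ := (A * B).trace

/-- Norm induced by `finner` (Frobenius norm on symmetric matrices). -/
def fnorm (A : Mat3) : ℝ := Real.sqrt (finner A A)

/-- Hydrostatic pressure: p(σ) = tr(σ)/3. -/
def pvol (σ : Mat3) : ℝ := σ.trace / 3

/-- Deviatoric part: dev(σ) = σ − p(σ)·I. -/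
def devm (σ : Mat3) : Mat3 := σ - pvol σ • (1 : Mat3)

/-- ϱ(σ) = ‖dev(σ)‖. -/
def rho (σ : Mat3) : ℝ := fnorm (devm σ)

/-- The subdifferential ∂ϱ(σ): symmetric matrices n̂ with
ϱ(τ) ≥ ϱ(σ) + ⟨n̂, τ − σ⟩ for all symmetric τ. -/
def subgradRho (σ : Mat3) : Set Mat3 :=
  {n : Mat3 | n.IsSymm ∧ ∀ τ : Mat3, τ.IsSymm → rho σ + finner n (τ - σ) ≤ rho τ}

/-- Lode angle θ(σ) = (1/3)·arccos((3√3/2)·J₃/J₂^{3/2}), with J₂ = ϱ²/2 and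
J₃ = tr(dev(σ)³)/3 (meaningful when ϱ(σ) > 0). -/
def lode (σ : Mat3) : ℝ :=
  (1/3) * Real.arccos ((3 * Real.sqrt 3 / 2) *
    ((devm σ * devm σ * devm σ).trace / 3) / Real.rpow (rho σ ^ 2 / 2) (3/2))

/-- Willam–Warnke function r_e with eccentricity parameter e. -/
def rW (e x : ℝ) : ℝ :=
  (4 * (1 - e^2) * x^2 + (2*e - 1)^2) /
    (2 * (1 - e^2) * x + (2*e - 1) * Real.sqrt (4 * (1 - e^2) * x^2 + 5*e^2 - 4*e))

/-- ϱ_e(σ) = ϱ(σ)·r_e(cos θ(σ)) for ϱ(σ) > 0, and ϱ_e(σ) = 0 for ϱ(σ) = 0. -/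
def rhoE (e : ℝ) (σ : Mat3) : ℝ :=
  if rho σ = 0 then 0 else rho σ * rW e (Real.cos (lode σ))

/-- m_g'(p) = A_g·exp((p − f̄_t/3)/(B_g·f̄_c)). -/
def mgp (Ag Bg fc ft p : ℝ) : ℝ := Ag * Real.exp ((p - ft/3) / (Bg * fc))

/-- Jirásek–Grassl yield function f̂(p,ϱ,ϱ_e) = (3/2)(ϱ/f̄_c)² + m₀(ϱ_e/(√6 f̄_c) + p/f̄_c) − 1. -/
def fJG (m0 fc p ϱ ϱe : ℝ) : ℝ :=
  (3/2) * (ϱ/fc)^2 + m0 * (ϱe / (Real.sqrt 6 * fc) + p/fc) - 1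

-- auxiliary lemmas
lemma finner_eq_sum (A B : Mat3) : finner A B = ∑ i, ∑ j, A i j * B j i := by
  simp [finner, Matrix.trace, Matrix.mul_apply, Matrix.diag]

def emb (A : Mat3) : EuclideanSpace ℝ (Fin 3 × Fin 3) :=
  WithLp.toLp 2 (fun q : Fin 3 × Fin 3 => A q.1 q.2)

lemma finner_eq_inner (A B : Mat3) (hB : B.IsSymm) :
    finner A B = inner ℝ (emb A) (emb B) := by
  rw [finner_eq_sum, PiLp.inner_apply, Fintype.sum_prod_type]
  simp only [RCLike.inner_apply, starRingEnd_apply, star_trivial, emb, PiLp.toLp_apply]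
  refine Finset.sum_congr rfl fun i _ => Finset.sum_congr rfl fun j _ => ?_
  rw [hB.apply i j, mul_comm]

lemma fnorm_eq_norm (A : Mat3) (hA : A.IsSymm) : fnorm A = ‖emb A‖ := by
  rw [fnorm, finner_eq_inner A A hA, real_inner_self_eq_norm_mul_norm, ← sq,
    Real.sqrt_sq (norm_nonneg _)]

lemma finner_le (A B : Mat3) (hA : A.IsSymm) (hB : B.IsSymm) :
    finner A B ≤ fnorm A * fnorm B := by
  rw [finner_eq_inner A B hB, fnorm_eq_norm A hA, fnorm_eq_norm B hB]
  exact real_inner_le_norm _ _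

lemma finner_self_nonneg (A : Mat3) (hA : A.IsSymm) : 0 ≤ finner A A := by
  rw [finner_eq_inner A A hA]; exact real_inner_self_nonneg

lemma finner_smul_left (a : ℝ) (A B : Mat3) : finner (a • A) B = a * finner A B := by
  simp [finner, Matrix.smul_mul]

lemma finner_smul_right (a : ℝ) (A B : Mat3) : finner A (a • B) = a * finner A B := by
  simp [finner, Matrix.mul_smul]

lemma finner_add_right (A B C : Mat3) : finner A (B + C) = finner A B + finner A C := by
  simp [finner, Matrix.mul_add]

lemma finner_sub_right (A B C : Mat3) : finner A (B - C) = finner A B - finner A C := by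
  simp [finner, Matrix.mul_sub]

lemma finner_one_right (A : Mat3) : finner A (1 : Mat3) = A.trace := by
  simp [finner]

lemma fnorm_smul (a : ℝ) (A : Mat3) : fnorm (a • A) = |a| * fnorm A := by
  rw [fnorm, finner_smul_left, finner_smul_right]
  rw [show a * (a * finner A A) = a^2 * finner A A by ring,
    Real.sqrt_mul (sq_nonneg a), Real.sqrt_sq_eq_abs]
  rfl

lemma rho_nonneg (σ : Mat3) : 0 ≤ rho σ := Real.sqrt_nonneg _

/-- Jirásek–Grassl plastic correction, converse direction. -/
theorem JG_plastic_corrector_converse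
    (G K m0 fc Ag Bg ft e : ℝ)
    (hG : 0 < G) (hK : 0 < K) (hm0 : 0 < m0) (hfc : 0 < fc)
    (hAg : 0 < Ag) (hBg : 0 < Bg) (hft : 0 ≤ ft) (he : e ∈ Set.Icc (1/2 : ℝ) 1)
    (σtr : Mat3) (hσtr : σtr.IsSymm) (hϱtr : 0 < rho σtr)
    (htrial : 0 < fJG m0 fc (pvol σtr) (rho σtr) (rhoE e σtr))
    (p ϱ Δl : ℝ) (hΔl : 0 < Δl) (hϱ : 0 ≤ ϱ)
    (hpeq : p = pvol σtr - Δl * K * mgp Ag Bg fc ft p / fc)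
    (hϱeq : ϱ = max 0 (rho σtr - Δl * (2 * G * (3 * ϱ / fc^2 + m0 / (Real.sqrt 6 * fc)))))
    (hfred : fJG m0 fc p ϱ (ϱ * rW e (Real.cos (lode σtr))) = 0)
    (σ : Mat3)
    (hσdef : σ = if Δl * (2 * G * (3 * ϱ / fc^2 + m0 / (Real.sqrt 6 * fc))) < rho σtr then
        p • (1 : Mat3) + ϱ • ((rho σtr)⁻¹ • devm σtr)
      else
        p • (1 : Mat3)) :
    pvol σ = p ∧ rho σ = ϱ ∧
    (∃ n ∈ subgradRho σ,
      σ = σtr - Δl • ((K * mgp Ag Bg fc ft (pvol σ) / fc) • (1 : Mat3) +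
        (2 * G * (3 * rho σ / fc^2 + m0 / (Real.sqrt 6 * fc))) • n)) ∧
    fJG m0 fc (pvol σ) (rho σ) (rhoE e σ) = 0 := by
  set s : Mat3 := devm σtr with hs
  set R : ℝ := rho σtr with hR
  have hRne : R ≠ 0 := ne_of_gt hϱtr
  have hssymm : s.IsSymm := by
    simp only [hs, devm, Matrix.IsSymm, Matrix.transpose_sub, Matrix.transpose_smul,
      Matrix.transpose_one, hσtr.eq]
  have hsmulsymm : ∀ a : ℝ, (a • s).IsSymm := fun a => by
    simp only [Matrix.IsSymm, Matrix.transpose_smul, hssymm.eq]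
  have hstr : s.trace = 0 := by
    simp [hs, devm, pvol, Matrix.trace_sub, Matrix.trace_smul, Matrix.trace_one]
  have hfs : fnorm s = R := rfl
  have hss : finner s s = R ^ 2 := by
    have h0 := finner_self_nonneg s hssymm
    have : R = Real.sqrt (finner s s) := rfl
    rw [this, Real.sq_sqrt h0]
  set c : ℝ := Δl * (2 * G * (3 * ϱ / fc^2 + m0 / (Real.sqrt 6 * fc))) with hc
  have h6 : (0:ℝ) < Real.sqrt 6 := Real.sqrt_pos.mpr (by norm_num)
  have hcpos : 0 < c := by
    rw [hc]
    apply mul_pos hΔl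
    apply mul_pos (by linarith)
    have h1 : 0 < m0 / (Real.sqrt 6 * fc) := div_pos hm0 (by positivity)
    have h2 : 0 ≤ 3 * ϱ / fc^2 := div_nonneg (by linarith) (by positivity)
    linarith
  clear_value s R c
  have hσtr_decomp : σtr = R • (R⁻¹ • s) + pvol σtr • (1 : Mat3) := by
    rw [smul_smul, mul_inv_cancel₀ hRne, one_smul, hs, devm]
    abel
  have hdevtau : ∀ (a : ℝ) (τ : Mat3), finner (a • s) τ = finner (a • s) (devm τ) := by
    intro a τ
    rw [devm, finner_sub_right, finner_smul_right, finner_smul_left, finner_one_right,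
      Matrix.trace_smul, hstr]
    simp
  have hdevsymm : ∀ τ : Mat3, τ.IsSymm → (devm τ).IsSymm := by
    intro τ hτ
    simp only [devm, Matrix.IsSymm, Matrix.transpose_sub, Matrix.transpose_smul,
      Matrix.transpose_one, hτ.eq]
  have hCS : ∀ (a : ℝ) (τ : Mat3), 0 ≤ a → τ.IsSymm →
      finner (a • s) τ ≤ a * R * rho τ := by
    intro a τ ha hτ
    rw [hdevtau]
    have h := finner_le (a • s) (devm τ) (hsmulsymm a) (hdevsymm τ hτ)
    rw [fnorm_smul, abs_of_nonneg ha, hfs] at h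
    calc finner (a • s) (devm τ) ≤ a * R * fnorm (devm τ) := h
      _ = a * R * rho τ := rfl
  by_cases hcase : c < R
  · -- plastic radial return, ϱ > 0
    have hϱv : ϱ = R - c := by
      rw [hϱeq]; exact max_eq_right (by linarith)
    have hϱpos : 0 < ϱ := by rw [hϱv]; linarith
    have hσ : σ = p • (1 : Mat3) + (ϱ * R⁻¹) • s := by
      rw [hσdef, if_pos hcase, smul_smul]
    have hkpos : 0 < ϱ * R⁻¹ := mul_pos hϱpos (inv_pos.mpr hϱtr)
    have hpv : pvol σ = p := by
      rw [hσ, pvol, Matrix.trace_add, Matrix.trace_smul, Matrix.trace_smul,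
        Matrix.trace_one, hstr]
      simp
    have hdev : devm σ = (ϱ * R⁻¹) • s := by
      rw [devm, hpv, hσ, add_sub_cancel_left]
    have hrho : rho σ = ϱ := by
      have h1 : rho σ = |ϱ * R⁻¹| * fnorm s := by rw [rho, hdev, fnorm_smul]
      rw [h1, abs_of_pos hkpos, hfs, mul_assoc, inv_mul_cancel₀ hRne, mul_one]
    refine ⟨hpv, hrho, ⟨R⁻¹ • s, ⟨hsmulsymm R⁻¹, ?_⟩, ?_⟩, ?_⟩
    · -- subgradient inequality
      intro τ hτ
      have hnτ : finner (R⁻¹ • s) τ ≤ rho τ := by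
        have h := hCS R⁻¹ τ (by positivity) hτ
        rw [inv_mul_cancel₀ hRne, one_mul] at h
        exact h
      have hnσ : finner (R⁻¹ • s) σ = ϱ := by
        rw [hσ, finner_add_right, finner_smul_right, finner_smul_right,
          finner_smul_left, finner_smul_left, finner_one_right, hstr, hss]
        field_simp
        ring
      rw [finner_sub_right, hnσ, hrho]
      linarith
    · -- the update equation
      rw [hpv, hrho, hσ]
      nth_rewrite 1 [hσtr_decomp]
      match_scalars
      · linear_combination hpeq
      · linear_combination R⁻¹ * hϱv - R⁻¹ * hc
    · -- yield condition
      rw [hpv, hrho]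
      have hϱk : ϱ = (ϱ * R⁻¹) * R := by
        rw [mul_assoc, inv_mul_cancel₀ hRne, mul_one]
      have hlode : lode σ = lode σtr := by
        unfold lode
        rw [hdev, hrho, ← hs, ← hR]
        have htr3 : (((ϱ * R⁻¹) • s) * ((ϱ * R⁻¹) • s) * ((ϱ * R⁻¹) • s)).trace
            = (ϱ * R⁻¹)^3 * (s * s * s).trace := by
          simp only [Matrix.smul_mul, Matrix.mul_smul, Matrix.trace_smul, smul_eq_mul]
          ring
        have hb : ϱ^2/2 = (ϱ * R⁻¹)^2 * (R^2/2) := by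
          nth_rewrite 1 [hϱk]
          ring
        have hk3 : Real.rpow (ϱ^2/2) (3/2) = (ϱ * R⁻¹)^3 * Real.rpow (R^2/2) (3/2) := by
          rw [Real.rpow_eq_pow, Real.rpow_eq_pow, hb,
            Real.mul_rpow (sq_nonneg _) (by positivity)]
          congr 1
          rw [← Real.rpow_natCast (ϱ * R⁻¹) 2, ← Real.rpow_natCast (ϱ * R⁻¹) 3,
            ← Real.rpow_mul hkpos.le]
          norm_num
        rw [htr3, hk3]
        have hD : (0:ℝ) < Real.rpow (R^2/2) (3/2) :=
          Real.rpow_pos_of_pos (by positivity) _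
        have hk3ne : (ϱ * R⁻¹)^3 ≠ 0 := by positivity
        congr 2
        field_simp [hD.ne', hk3ne]
      have hσne : rho σ ≠ 0 := by rw [hrho]; exact ne_of_gt hϱpos
      simp only [rhoE, if_neg hσne, hrho, hlode]
      rw [if_neg (ne_of_gt hϱpos)]
      exact hfred
  · -- full return to the apex, ϱ = 0
    have hge : R ≤ c := not_lt.mp hcase
    have hϱ0 : ϱ = 0 := by
      rw [hϱeq]; exact max_eq_left (by linarith)
    have hσ : σ = p • (1 : Mat3) := by rw [hσdef, if_neg hcase]
    have hpv : pvol σ = p := by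
      rw [hσ, pvol, Matrix.trace_smul, Matrix.trace_one]
      simp
    have hdev : devm σ = 0 := by rw [devm, hpv, hσ, sub_self]
    have hrho : rho σ = ϱ := by
      rw [rho, hdev, hϱ0, fnorm]
      simp [finner]
    refine ⟨hpv, hrho, ⟨c⁻¹ • s, ⟨hsmulsymm c⁻¹, ?_⟩, ?_⟩, ?_⟩
    · -- subgradient inequality
      intro τ hτ
      have hnτ : finner (c⁻¹ • s) τ ≤ rho τ := by
        have h := hCS c⁻¹ τ (by positivity) hτ
        have hle : c⁻¹ * R ≤ 1 := by
          rw [inv_mul_le_iff₀ hcpos]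
          simpa using hge
        have hrt : 0 ≤ rho τ := rho_nonneg τ
        nlinarith
      have hnσ : finner (c⁻¹ • s) σ = 0 := by
        rw [hσ, finner_smul_right, finner_smul_left, finner_one_right, hstr]
        ring
      rw [finner_sub_right, hnσ, hrho, hϱ0]
      linarith
    · -- the update equation
      rw [hpv, hrho, hσ]
      nth_rewrite 1 [hσtr_decomp]
      match_scalars
      · linear_combination hpeq
      · rw [hϱ0]
        rw [hϱ0] at hc
        field_simp [hRne, hcpos.ne'] at hc ⊢
        linear_combination -hc
    · -- yield condition
      rw [hpv, hrho]
      have h0 : rho σ = 0 := by rw [hrho, hϱ0]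
      simp only [rhoE, if_pos h0]
      rw [hϱ0, zero_mul] at hfred
      rw [hϱ0]
      exact hfred
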